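/- Let φ : ℝ → ℝ be twice differentiable with bounded first and second derivatives and convex, and let m > 0. Then for every t ∈ [0,1], the function x ↦ F_{φ,m}(x,t) is convex on ℝ. -/

import Mathlib

open MeasureTheory ProbabilityTheory Set Real
open scoped ENNReal NNReal

lemma integrable_exp_mul_gaussian (b : ℝ) :
    Integrable (fun z => Real.exp (b * z)) (gaussianReal 0 1) := by
  rw [gaussianReal_of_var_ne_zero _ one_ne_zero,
    integrable_withDensity_iff (measurable_gaussianPDF 0 1)
      (Filter.Eventually.of_forall fun x => ENNReal.ofReal_lt_top)]
  have heq : (fun z => Real.exp (b * z) * (gaussianPDF 0 1 z).toReal)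
      = fun z => ((Real.sqrt (2 * π * 1))⁻¹ * Real.exp (b ^ 2 / 2))
        * Real.exp (-(1/2) * (z - b) ^ 2) := by
    funext z
    rw [gaussianPDF, ENNReal.toReal_ofReal (gaussianPDFReal_nonneg _ _ _), gaussianPDFReal]
    push_cast
    rw [mul_comm, mul_assoc, ← Real.exp_add, mul_assoc _ (rexp (b ^ 2 / 2)), ← Real.exp_add]
    congr 1
    ring
  rw [heq]
  exact ((integrable_exp_neg_mul_sq (by norm_num : (0:ℝ) < 1/2)).comp_sub_right b).const_mul _

lemma integrable_exp_comb {φ : ℝ → ℝ} {C : ℝ} (hcont : Continuous φ)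
    (hLip : ∀ u w : ℝ, |φ u - φ w| ≤ C * |u - w|)
    (u v x y c : ℝ) (hu : 0 ≤ u) (hv : 0 ≤ v) :
    Integrable (fun z => Real.exp (u * φ (x + c * z) + v * φ (y + c * z)))
      (gaussianReal 0 1) := by
  have hC : 0 ≤ C := by
    have h := hLip 1 0
    simp at h
    exact le_trans (abs_nonneg _) h
  set d := (u + v) * C * |c| with hd_def
  have hd : 0 ≤ d := by positivity
  set K := u * φ x + v * φ y with hK_def
  refine Integrable.mono
    (g := fun z => Real.exp K * (Real.exp (d * z) + Real.exp (-d * z)))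
    (((integrable_exp_mul_gaussian d).add (integrable_exp_mul_gaussian (-d))).const_mul _)
    ?_ ?_
  · exact Continuous.aestronglyMeasurable (by fun_prop)
  · filter_upwards with z
    have hb1 : φ (x + c * z) ≤ φ x + C * |c| * |z| := by
      have := hLip (x + c * z) x
      have habs : |φ (x + c * z) - φ x| ≤ C * (|c| * |z|) := by
        simpa [abs_mul] using this
      have := (abs_le.mp habs).2
      linarith
    have hb2 : φ (y + c * z) ≤ φ y + C * |c| * |z| := by
      have := hLip (y + c * z) y
      have habs : |φ (y + c * z) - φ y| ≤ C * (|c| * |z|) := by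
        simpa [abs_mul] using this
      have := (abs_le.mp habs).2
      linarith
    have harg : u * φ (x + c * z) + v * φ (y + c * z) ≤ K + d * |z| := by
      rw [hK_def, hd_def]
      nlinarith [mul_le_mul_of_nonneg_left hb1 hu, mul_le_mul_of_nonneg_left hb2 hv]
    have h1 : Real.exp (u * φ (x + c * z) + v * φ (y + c * z))
        ≤ Real.exp K * Real.exp (d * |z|) := by
      rw [← Real.exp_add]; exact Real.exp_le_exp.2 harg
    have h2 : Real.exp (d * |z|) ≤ Real.exp (d * z) + Real.exp (-d * z) := by
      rcases le_total 0 z with hz | hz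
      · rw [abs_of_nonneg hz]
        nlinarith [Real.exp_pos (-d * z)]
      · rw [abs_of_nonpos hz]
        have : d * -z = -d * z := by ring
        rw [this]
        nlinarith [Real.exp_pos (d * z)]
    rw [Real.norm_eq_abs, Real.norm_eq_abs, abs_of_pos (Real.exp_pos _), abs_of_pos (by positivity)]
    calc Real.exp (u * φ (x + c * z) + v * φ (y + c * z))
        ≤ Real.exp K * Real.exp (d * |z|) := h1
      _ ≤ Real.exp K * (Real.exp (d * z) + Real.exp (-d * z)) := by
          exact mul_le_mul_of_nonneg_left h2 (Real.exp_pos K).le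

lemma log_integral_convex {φ : ℝ → ℝ} {C : ℝ} (hcont : Continuous φ)
    (hLip : ∀ u w : ℝ, |φ u - φ w| ≤ C * |u - w|)
    (hconv : ConvexOn ℝ Set.univ φ) {m : ℝ} (hm : 0 < m) (c : ℝ) :
    ConvexOn ℝ Set.univ
      (fun x => Real.log (∫ z, Real.exp (m * φ (x + c * z)) ∂(gaussianReal 0 1))) := by
  set γ := gaussianReal 0 1 with hγ
  have hInt : ∀ x : ℝ, Integrable (fun z => Real.exp (m * φ (x + c * z))) γ := fun x => by
    have := integrable_exp_comb hcont hLip m 0 x x c hm.le le_rfl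
    simpa using this
  refine ⟨convex_univ, fun x _ y _ a b ha hb hab => ?_⟩
  rcases eq_or_lt_of_le ha with h0 | ha'
  · have hb1 : b = 1 := by linarith
    simp [← h0, hb1]
  rcases eq_or_lt_of_le hb with h0 | hb'
  · have ha1 : a = 1 := by linarith
    simp [← h0, ha1]
  have halt : a < 1 := by linarith
  have hblt : b < 1 := by linarith
  set F := fun z => Real.exp (m * φ (x + c * z)) with hF_def
  set G := fun z => Real.exp (m * φ (y + c * z)) with hG_def
  have hFpos : 0 < ∫ z, F z ∂γ := integral_exp_pos (hInt x)
  have hGpos : 0 < ∫ z, G z ∂γ := integral_exp_pos (hInt y)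
  have hH : Integrable
      (fun z => Real.exp (a * (m * φ (x + c*z)) + b * (m * φ (y + c*z)))) γ := by
    have := integrable_exp_comb hcont hLip (a*m) (b*m) x y c (by positivity) (by positivity)
    simpa [mul_assoc] using this
  have hpq : (1/a).HolderConjugate (1/b) := Real.holderConjugate_iff.mpr ⟨one_lt_one_div ha' halt, by
    rw [one_div, one_div, inv_inv, inv_inv]; exact hab⟩
  have memaux : ∀ (w : ℝ) (e : ℝ), 0 < e →
      MemLp (fun z => Real.exp (m * φ (w + c * z)) ^ e) (ENNReal.ofReal (1/e)) γ := by
    intro w e he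
    have h1 : MemLp (fun z => Real.exp (m * φ (w + c * z))) 1 γ :=
      memLp_one_iff_integrable.2 (hInt w)
    have h2 := (memLp_norm_rpow_iff (q := ENNReal.ofReal e)
      (hInt w).aestronglyMeasurable
      (by simp [ENNReal.ofReal_eq_zero, not_le, he]) ENNReal.ofReal_ne_top).2 h1
    simp only [ENNReal.toReal_ofReal he.le, Real.norm_eq_abs] at h2
    have heq : (fun z => |Real.exp (m * φ (w + c * z))| ^ e)
        = fun z => Real.exp (m * φ (w + c * z)) ^ e := by
      funext z
      rw [abs_of_pos (Real.exp_pos _)]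
    have hexp : (1 : ℝ≥0∞) / ENNReal.ofReal e = ENNReal.ofReal (1/e) := by
      rw [one_div, one_div, ← ENNReal.ofReal_inv_of_pos he]
    rw [heq, hexp] at h2
    exact h2
  have key : ∫ z, Real.exp (m * φ (a*x + b*y + c * z)) ∂γ
      ≤ (∫ z, F z ∂γ) ^ a * (∫ z, G z ∂γ) ^ b := by
    have step1 : ∀ z, Real.exp (m * φ (a*x + b*y + c*z))
        ≤ Real.exp (a * (m * φ (x + c*z)) + b * (m * φ (y + c*z))) := by
      intro z
      apply Real.exp_le_exp.2
      have h := hconv.2 (mem_univ (x + c*z)) (mem_univ (y + c*z)) ha hb hab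
      simp only [smul_eq_mul] at h
      have harg : a*x + b*y + c*z = a * (x + c*z) + b * (y + c*z) := by
        linear_combination (-(c*z)) * hab
      rw [harg]
      calc m * φ (a*(x+c*z) + b*(y+c*z)) ≤ m * (a * φ (x+c*z) + b * φ (y+c*z)) :=
            mul_le_mul_of_nonneg_left h hm.le
        _ = a * (m * φ (x+c*z)) + b * (m * φ (y+c*z)) := by ring
    have step2 : ∫ z, Real.exp (m * φ (a*x + b*y + c*z)) ∂γ
        ≤ ∫ z, Real.exp (a * (m * φ (x + c*z)) + b * (m * φ (y + c*z))) ∂γ :=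
      integral_mono (hInt (a*x + b*y)) hH step1
    have step3eq : (fun z => Real.exp (a * (m * φ (x + c*z)) + b * (m * φ (y + c*z))))
        = fun z => F z ^ a * G z ^ b := by
      funext z
      rw [show F z = rexp (m * φ (x + c*z)) from rfl, show G z = rexp (m * φ (y + c*z)) from rfl,
        ← Real.exp_mul, ← Real.exp_mul, ← Real.exp_add]
      congr 1
      ring
    rw [step3eq] at step2
    have step4 := integral_mul_le_Lp_mul_Lq_of_nonneg hpq
      (f := fun z => F z ^ a) (g := fun z => G z ^ b)
      (Filter.Eventually.of_forall fun z => Real.rpow_nonneg (Real.exp_pos _).le a)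
      (Filter.Eventually.of_forall fun z => Real.rpow_nonneg (Real.exp_pos _).le b)
      (memaux x a ha') (memaux y b hb')
    have e1 : (∫ z, (F z ^ a) ^ (1/a : ℝ) ∂γ) = ∫ z, F z ∂γ := by
      congr 1
      funext z
      have h0 : (0:ℝ) ≤ F z := (Real.exp_pos _).le
      rw [← Real.rpow_mul h0, mul_one_div, div_self ha'.ne', Real.rpow_one]
    have e2 : (∫ z, (G z ^ b) ^ (1/b : ℝ) ∂γ) = ∫ z, G z ∂γ := by
      congr 1
      funext z
      have h0 : (0:ℝ) ≤ G z := (Real.exp_pos _).le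
      rw [← Real.rpow_mul h0, mul_one_div, div_self hb'.ne', Real.rpow_one]
    rw [e1, e2, one_div_one_div, one_div_one_div] at step4
    exact step2.trans step4
  simp only [smul_eq_mul]
  calc Real.log (∫ z, Real.exp (m * φ (a*x + b*y + c*z)) ∂γ)
      ≤ Real.log ((∫ z, F z ∂γ) ^ a * (∫ z, G z ∂γ) ^ b) :=
        Real.log_le_log (integral_exp_pos (hInt (a*x + b*y))) key
    _ = a * Real.log (∫ z, F z ∂γ) + b * Real.log (∫ z, G z ∂γ) := by
        rw [Real.log_mul (Real.rpow_pos_of_pos hFpos a).ne' (Real.rpow_pos_of_pos hGpos b).ne',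
          Real.log_rpow hFpos, Real.log_rpow hGpos]



open MeasureTheory ProbabilityTheory Set

/-- `parisiF φ m x t = (1/m) log E[exp (m φ(x + √t Z))]` with `Z` standard Gaussian. -/
noncomputable def parisiF (φ : ℝ → ℝ) (m : ℝ) (x t : ℝ) : ℝ :=
  (1 / m) * Real.log (∫ z, Real.exp (m * φ (x + Real.sqrt t * z)) ∂(gaussianReal 0 1))

/-- `φ` is twice differentiable with bounded first and second derivatives. -/
def TwiceDiffBounded (φ : ℝ → ℝ) : Prop :=
  Differentiable ℝ φ ∧ Differentiable ℝ (deriv φ) ∧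
    (∃ C, ∀ x, |deriv φ x| ≤ C) ∧ (∃ C, ∀ x, |deriv (deriv φ) x| ≤ C)

theorem parisiF_convex_in_x (φ : ℝ → ℝ) (hφ : TwiceDiffBounded φ)
    (hconv : ConvexOn ℝ Set.univ φ) (m : ℝ) (hm : 0 < m) :
    ∀ t ∈ Set.Icc (0 : ℝ) 1, ConvexOn ℝ Set.univ (fun x => parisiF φ m x t) := by
  intro t _
  obtain ⟨hdiff, -, ⟨C, hC⟩, -⟩ := hφ
  have hlip : LipschitzWith C.toNNReal φ :=
    lipschitzWith_of_nnnorm_deriv_le hdiff fun x => by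
      rw [← NNReal.coe_le_coe, coe_nnnorm, Real.norm_eq_abs, Real.coe_toNNReal']
      exact le_trans (hC x) (le_max_left _ _)
  have hLip : ∀ u w : ℝ, |φ u - φ w| ≤ (max C 0) * |u - w| := fun u w => by
    have := hlip.dist_le_mul u w
    simpa [Real.dist_eq, Real.coe_toNNReal'] using this
  have h := (log_integral_convex hdiff.continuous hLip hconv hm (Real.sqrt t)).smul
    (by positivity : (0:ℝ) ≤ 1/m)
  simp only [parisiF]
  exact h
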